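/- (Serre's Artin theorem) Let G be a finite group and H₁, …, Hₙ subgroups. Every element of G is conjugate to an element of some Hᵢ if and only if every character of G is a ℚ-linear combination of characters induced from characters of the Hᵢ. -/

import Mathlib

/-- The induced character `(1_C)^G` of the trivial character of a subgroup `C`. -/
noncomputable def indTriv (G : Type) [Group G] [Fintype G] (C : Subgroup G) : G → ℂ :=
  fun g => (Nat.card {x : G // x⁻¹ * g * x ∈ C} : ℂ) / (Nat.card C : ℂ)

/-- `χ : G → ℂ` is a character: the trace of a nonzero finite-dimensional complex rep. -/
def IsCharacter (G : Type) [Group G] (χ : G → ℂ) : Prop :=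
  ∃ V : FDRep ℂ G, χ = V.character ∧ χ ≠ 0

/-- `χ` is an irreducible character of `G`. -/
def IsIrredChar (G : Type) [Group G] (χ : G → ℂ) : Prop :=
  ∃ V : FDRep ℂ G, CategoryTheory.Simple V ∧ χ = V.character

/-- All values of `χ` are rational. -/
def IsRatValued {G : Type} (χ : G → ℂ) : Prop := ∀ g : G, ∃ q : ℚ, χ g = (q : ℂ)

/-- Subgroups `H` and `K` are conjugate in `G`. -/
def SubConj {G : Type} [Group G] (H K : Subgroup G) : Prop :=
  ∃ g : G, Subgroup.map (MulAut.conj g).toMonoidHom H = K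

/-- The ℂ-subspace of `G → ℂ` spanned by the rational valued characters of `G`. -/
noncomputable def ratCharSpan (G : Type) [Group G] : Submodule ℂ (G → ℂ) :=
  Submodule.span ℂ {χ : G → ℂ | IsCharacter G χ ∧ IsRatValued χ}

/-- The number of conjugacy classes of cyclic subgroups of `G`. -/
noncomputable def numCyclicClasses (G : Type) [Group G] : ℕ :=
  Nat.card (Quot (fun H K : {H : Subgroup G // IsCyclic ↥H} => SubConj H.1 K.1))

/-- Indicator function of the set of `g` with `⟨g⟩` conjugate to `⟨x⟩`. -/
noncomputable def Phi (G : Type) [Group G] (x : G) : G → ℂ := fun g =>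
  letI := Classical.propDecidable
  if SubConj (Subgroup.zpowers g) (Subgroup.zpowers x) then 1 else 0

/-- The cyclotomic field `ℚ(e^{2πi/n})` as a subfield of `ℂ`. -/
noncomputable def cycField (n : ℕ) : IntermediateField ℚ ℂ :=
  IntermediateField.adjoin ℚ ({Complex.exp (2 * Real.pi * Complex.I / n)} : Set ℂ)

/-- `ψ` is in the `Gal(ℚ(ζ_n)/ℚ)`-orbit of `χ` (acting on character values). -/
def galRel (G : Type) [Group G] (n : ℕ) (χ ψ : G → ℂ) : Prop :=
  ∃ σ : cycField n ≃ₐ[ℚ] cycField n,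
    ∀ g : G, ∃ h : χ g ∈ cycField n, (σ ⟨χ g, h⟩ : ℂ) = ψ g

/-- The field `ℚ(χ)` generated by the values of `χ`. -/
noncomputable def charField (G : Type) (χ : G → ℂ) : IntermediateField ℚ ℂ :=
  IntermediateField.adjoin ℚ (Set.range χ)

/-- The rationalization `χ^rat = ∑_{σ ∈ Gal(ℚ(χ)/ℚ)} χ^σ`. -/
noncomputable def ratzn (G : Type) [Group G] (χ : G → ℂ) : G → ℂ :=
  fun g => ∑ᶠ σ : charField G χ ≃ₐ[ℚ] charField G χ,
    (σ ⟨χ g, IntermediateField.subset_adjoin ℚ _ ⟨g, rfl⟩⟩ : ℂ)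

/-- The induced character of a character `φ` of a subgroup `H`. -/
noncomputable def inducedChar (G : Type) [Group G] [Fintype G] (H : Subgroup G)
    (φ : H → ℂ) : G → ℂ := fun g =>
  letI := Classical.propDecidable
  (Nat.card H : ℂ)⁻¹ * ∑ x : G, if h : x⁻¹ * g * x ∈ H then φ ⟨x⁻¹ * g * x, h⟩ else 0

section ArtinAux

open CategoryTheory MonoidalCategory Polynomial

variable {G : Type} [Group G]

lemma IsCharacter.one_ne_zero' {χ : G → ℂ} (h : IsCharacter G χ) : χ 1 ≠ 0 := by
  obtain ⟨V, rfl, hne⟩ := h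
  rw [FDRep.char_one]
  intro h0
  have hr : Module.finrank ℂ V = 0 := by exact_mod_cast h0
  have : Subsingleton V := Module.finrank_zero_iff.mp hr
  apply hne
  funext g
  have : V.ρ g = 0 := Subsingleton.elim _ _
  simp [FDRep.character, this]

lemma IsCharacter.conj_eq {χ : G → ℂ} (h : IsCharacter G χ) (g x : G) :
    χ (x⁻¹ * g * x) = χ g := by
  obtain ⟨V, rfl, -⟩ := h
  simpa using FDRep.char_conj V g x⁻¹

lemma IsCharacter.mul' {χ ψ : G → ℂ} (h1 : IsCharacter G χ) (h2 : IsCharacter G ψ) :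
    IsCharacter G (χ * ψ) := by
  have hne : (χ * ψ) 1 ≠ 0 := mul_ne_zero h1.one_ne_zero' h2.one_ne_zero'
  obtain ⟨V, rfl, -⟩ := h1
  obtain ⟨W, rfl, -⟩ := h2
  exact ⟨V ⊗ W, (FDRep.char_tensor V W).symm, fun h0 => hne (by rw [h0]; rfl)⟩

lemma IsCharacter.res' (H : Subgroup G) {χ : G → ℂ} (h : IsCharacter G χ) :
    IsCharacter ↥H (fun x : ↥H => χ ↑x) := by
  have h1 := h.one_ne_zero'
  obtain ⟨V, rfl, -⟩ := h
  refine ⟨FDRep.of ((V.ρ : Representation ℂ G V).comp H.subtype), rfl, ?_⟩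
  intro h0
  exact h1 (congrFun h0 1)

lemma isCharacter_one' : IsCharacter G (1 : G → ℂ) := by
  refine ⟨FDRep.of (Representation.trivial ℂ (G := G) (V := ℂ)), ?_, one_ne_zero⟩
  funext g
  show (1 : ℂ) = LinearMap.trace ℂ ℂ (1 : ℂ →ₗ[ℂ] ℂ)
  rw [LinearMap.trace_one, Module.finrank_self]
  norm_num

variable [Fintype G]

/-- The permutation representation of `G` on `G ⧸ H`. -/
noncomputable def permRep (H : Subgroup G) : FDRep ℂ G :=
  FDRep.of (Representation.ofMulAction ℂ G (G ⧸ H))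

lemma permRep_char (H : Subgroup G) (g : G) :
    (permRep H).character g = (Nat.card {q : G ⧸ H // g • q = q} : ℂ) := by
  classical
  letI : Fintype (G ⧸ H) := Fintype.ofFinite _
  let b : Module.Basis (G ⧸ H) ℂ (MonoidAlgebra ℂ (G ⧸ H)) := MonoidAlgebra.basis (G ⧸ H) ℂ
  have : (permRep H).character g
      = Matrix.trace (LinearMap.toMatrix b b (Representation.ofMulAction ℂ G (G ⧸ H) g)) := by
    rw [FDRep.character]
    exact LinearMap.trace_eq_matrix_trace ℂ b _
  rw [this, Matrix.trace]
  have hdiag : ∀ q : G ⧸ H,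
      Matrix.diag (LinearMap.toMatrix b b (Representation.ofMulAction ℂ G (G ⧸ H) g)) q
        = if g • q = q then (1 : ℂ) else 0 := by
    intro q
    rw [Matrix.diag, LinearMap.toMatrix_apply]
    have hb : b q = MonoidAlgebra.single q 1 := rfl
    rw [hb, Representation.ofMulAction_single]
    simp [b, MonoidAlgebra.basis, MonoidAlgebra.coeffLinearEquiv, MonoidAlgebra.coeff_single, Finsupp.single_apply]
  rw [Finset.sum_congr rfl fun q _ => hdiag q]
  rw [Finset.sum_boole]
  rw [Nat.card_eq_fintype_card, Fintype.card_subtype]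

lemma card_conj_mem (H : Subgroup G) (g : G) :
    Nat.card {x : G // x⁻¹ * g * x ∈ H}
      = Nat.card H * Nat.card {q : G ⧸ H // g • q = q} := by
  classical
  have hmem : ∀ x : G, (QuotientGroup.mk x : G ⧸ H) ∈ {q : G ⧸ H | g • q = q}
      ↔ x⁻¹ * g * x ∈ H := by
    intro x
    show (g • (QuotientGroup.mk x : G ⧸ H) = QuotientGroup.mk x) ↔ _
    have : g • (QuotientGroup.mk x : G ⧸ H) = QuotientGroup.mk (g * x) := rfl
    rw [this, QuotientGroup.eq]
    constructor
    · intro h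
      have := H.inv_mem h
      simpa [mul_assoc] using this
    · intro h
      have := H.inv_mem h
      simpa [mul_assoc] using this
  have e1 : {x : G // x⁻¹ * g * x ∈ H}
      ≃ (QuotientGroup.mk ⁻¹' {q : G ⧸ H | g • q = q} : Set G) :=
    Equiv.subtypeEquiv (Equiv.refl G) (fun x => (hmem x).symm)
  have e2 := QuotientGroup.preimageMkEquivSubgroupProdSet H {q : G ⧸ H | g • q = q}
  rw [Nat.card_congr (e1.trans e2), Nat.card_prod]
  rfl

lemma nat_card_subgroup_ne_zero (H : Subgroup G) : (Nat.card H : ℂ) ≠ 0 := by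
  have : 0 < Nat.card H := Nat.card_pos
  exact_mod_cast this.ne'

lemma inducedChar_one_apply (H : Subgroup G) (g : G) :
    inducedChar G H 1 g = (Nat.card {q : G ⧸ H // g • q = q} : ℂ) := by
  classical
  have h1 : inducedChar G H 1 g
      = (Nat.card H : ℂ)⁻¹ * ∑ x : G, if x⁻¹ * g * x ∈ H then (1 : ℂ) else 0 := by
    rw [inducedChar]
    congr 1
  rw [h1, Finset.sum_boole]
  have h2 : (Finset.filter (fun x : G => x⁻¹ * g * x ∈ H) Finset.univ).card
      = Nat.card {x : G // x⁻¹ * g * x ∈ H} := by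
    rw [Nat.card_eq_fintype_card, Fintype.card_subtype]
  rw [h2, card_conj_mem, Nat.cast_mul, inv_mul_cancel_left₀ (nat_card_subgroup_ne_zero H)]

lemma isCharacter_inducedChar_one (H : Subgroup G) : IsCharacter G (inducedChar G H 1) := by
  refine ⟨permRep H, ?_, ?_⟩
  · funext g
    rw [inducedChar_one_apply, permRep_char]
  · intro h0
    have := congrFun h0 1
    rw [inducedChar_one_apply] at this
    have hpos : 0 < Nat.card {q : G ⧸ H // (1 : G) • q = q} := by
      have : Nonempty {q : G ⧸ H // (1 : G) • q = q} :=
        ⟨⟨QuotientGroup.mk 1, one_smul _ _⟩⟩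
      exact Nat.card_pos
    rw [Pi.zero_apply] at this
    have h00 : Nat.card {q : G ⧸ H // (1 : G) • q = q} = 0 := by exact_mod_cast this
    exact hpos.ne' h00

lemma pushpull (H : Subgroup G) {ψ : G → ℂ} (hψ : IsCharacter G ψ) (φ : ↥H → ℂ) :
    ψ * inducedChar G H φ = inducedChar G H ((fun x : ↥H => ψ ↑x) * φ) := by
  classical
  funext g
  show ψ g * inducedChar G H φ g = _
  rw [inducedChar, inducedChar]
  rw [mul_left_comm, Finset.mul_sum]
  congr 1
  apply Finset.sum_congr rfl
  intro x _
  split_ifs with h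
  · show ψ g * φ ⟨_, h⟩ = ψ (x⁻¹ * g * x) * φ ⟨_, h⟩
    rw [hψ.conj_eq g x]
  · exact mul_zero _

end ArtinAux


theorem stmt11 (G : Type) [Group G] [Fintype G] (n : ℕ) (H : Fin n → Subgroup G) :
    (∀ g : G, ∃ i, ∃ h ∈ H i, IsConj g h) ↔
      ∀ χ : G → ℂ, IsCharacter G χ →
        χ ∈ Submodule.span ℚ
          {f : G → ℂ | ∃ i, ∃ φ : ↥(H i) → ℂ, IsCharacter ↥(H i) φ ∧
            f = inducedChar G (H i) φ} := by
  classical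
  set S : Set (G → ℂ) := {f : G → ℂ | ∃ i, ∃ φ : ↥(H i) → ℂ, IsCharacter ↥(H i) φ ∧
            f = inducedChar G (H i) φ} with hS
  constructor
  · -- forward direction
    intro hcover χ hχ
    -- multiplication by a character preserves the span
    have hCharMulA : ∀ ψ : G → ℂ, IsCharacter G ψ → ∀ f, f ∈ Submodule.span ℚ S →
        ψ * f ∈ Submodule.span ℚ S := by
      intro ψ hψ f hf
      induction hf using Submodule.span_induction with
      | mem f hfS =>
        obtain ⟨i, φ, hφ, rfl⟩ := hfS
        exact Submodule.subset_span ⟨i, _, (hψ.res' (H i)).mul' hφ, pushpull (H i) hψ φ⟩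
      | zero => rw [mul_zero]; exact Submodule.zero_mem _
      | add x y hx hy ihx ihy => rw [mul_add]; exact Submodule.add_mem _ ihx ihy
      | smul a x hx ih => rw [mul_smul_comm]; exact Submodule.smul_mem _ _ ih
    set B := Submodule.span ℚ {ψ : G → ℂ | IsCharacter G ψ} with hB
    have hBMulA : ∀ b, b ∈ B → ∀ f, f ∈ Submodule.span ℚ S →
        b * f ∈ Submodule.span ℚ S := by
      intro b hb f hf
      induction hb using Submodule.span_induction with
      | mem x hx => exact hCharMulA x hx f hf
      | zero => rw [zero_mul]; exact Submodule.zero_mem _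
      | add x y hx hy ihx ihy => rw [add_mul]; exact Submodule.add_mem _ ihx ihy
      | smul a x hx ih => rw [smul_mul_assoc]; exact Submodule.smul_mem _ _ ih
    have hBMulB : ∀ b1, b1 ∈ B → ∀ b2, b2 ∈ B → b1 * b2 ∈ B := by
      intro b1 hb1
      induction hb1 using Submodule.span_induction with
      | mem x hx =>
        intro b2 hb2
        induction hb2 using Submodule.span_induction with
        | mem y hy => exact Submodule.subset_span (IsCharacter.mul' hx hy)
        | zero => rw [mul_zero]; exact Submodule.zero_mem _
        | add z w hz hw ihz ihw => rw [mul_add]; exact Submodule.add_mem _ ihz ihw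
        | smul a z hz ih => rw [mul_smul_comm]; exact Submodule.smul_mem _ _ ih
      | zero => intro b2 _; rw [zero_mul]; exact Submodule.zero_mem _
      | add x y hx hy ihx ihy =>
        intro b2 hb2
        rw [add_mul]; exact Submodule.add_mem _ (ihx b2 hb2) (ihy b2 hb2)
      | smul a x hx ih =>
        intro b2 hb2
        rw [smul_mul_assoc]; exact Submodule.smul_mem _ _ (ih b2 hb2)
    set ν : G → ℕ := fun g => ∑ i : Fin n, Nat.card {q : G ⧸ (H i) // g • q = q} with hν
    set c : G → ℂ := ∑ i : Fin n, inducedChar G (H i) 1 with hc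
    have hcval : ∀ g, c g = ((ν g : ℚ) : ℂ) := by
      intro g
      rw [hc, hν]
      simp only [Finset.sum_apply, inducedChar_one_apply]
      push_cast
      rfl
    have hcA : c ∈ Submodule.span ℚ S :=
      Submodule.sum_mem _ fun i _ => Submodule.subset_span ⟨i, 1, isCharacter_one', rfl⟩
    have hcB : c ∈ B :=
      Submodule.sum_mem _ fun i _ => Submodule.subset_span (isCharacter_inducedChar_one (H i))
    have hνpos : ∀ g, 0 < ν g := by
      intro g
      obtain ⟨i, h, hhH, hconj⟩ := hcover g
      obtain ⟨y, hy⟩ := isConj_iff.mp hconj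
      have hfix : Nonempty {q : G ⧸ (H i) // g • q = q} := by
        refine ⟨⟨QuotientGroup.mk y⁻¹, ?_⟩⟩
        show QuotientGroup.mk (g * y⁻¹) = QuotientGroup.mk y⁻¹
        rw [QuotientGroup.eq]
        have heq : (g * y⁻¹)⁻¹ * y⁻¹ = (y * g * y⁻¹)⁻¹ := by group
        rw [heq, hy]
        exact (H i).inv_mem hhH
      have hpos : 0 < Nat.card {q : G ⧸ (H i) // g • q = q} := Nat.card_pos
      calc 0 < Nat.card {q : G ⧸ (H i) // g • q = q} := hpos
        _ ≤ ν g := Finset.single_le_sum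
            (f := fun i : Fin n => Nat.card {q : G ⧸ (H i) // g • q = q})
            (fun _ _ => Nat.zero_le _) (Finset.mem_univ i)
    have hpowB : ∀ k : ℕ, c ^ (k + 1) ∈ B := by
      intro k
      induction k with
      | zero => rw [pow_one]; exact hcB
      | succ k ih => rw [pow_succ]; exact hBMulB _ ih _ hcB
    have hpowA : ∀ k : ℕ, c ^ (k + 1) ∈ Submodule.span ℚ S := by
      intro k
      induction k with
      | zero => rw [pow_one]; exact hcA
      | succ k ih => rw [pow_succ]; exact hBMulA _ (hpowB k) _ hcA
    set T : Finset ℕ := Finset.image ν Finset.univ with hT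
    set Q : Polynomial ℚ := ∏ v ∈ T, (Polynomial.X - Polynomial.C (v : ℚ)) with hQ
    have hQeval : ∀ g, Q.eval ((ν g : ℚ)) = 0 := by
      intro g
      rw [hQ, Polynomial.eval_prod]
      apply Finset.prod_eq_zero (Finset.mem_image_of_mem ν (Finset.mem_univ g))
      simp
    have ha0 : Q.coeff 0 ≠ 0 := by
      rw [Polynomial.coeff_zero_eq_eval_zero, hQ, Polynomial.eval_prod,
        Finset.prod_ne_zero_iff]
      intro v hv
      simp only [Polynomial.eval_sub, Polynomial.eval_X, Polynomial.eval_C, zero_sub,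
        neg_ne_zero]
      obtain ⟨g, -, rfl⟩ := Finset.mem_image.mp hv
      exact_mod_cast (hνpos g).ne'
    set R := Q.divX with hR
    have hkey : ∀ g, (ν g : ℚ) * R.eval ((ν g : ℚ)) = -Q.coeff 0 := by
      intro g
      have h1 := Polynomial.X_mul_divX_add Q
      have h2 := congrArg (Polynomial.eval ((ν g : ℚ))) h1
      rw [Polynomial.eval_add, Polynomial.eval_mul, Polynomial.eval_X, Polynomial.eval_C,
        hQeval g] at h2
      linarith [h2]
    have hone : (1 : G → ℂ) ∈ Submodule.span ℚ S := by
      have h1eq : (1 : G → ℂ) = ∑ k ∈ Finset.range (R.natDegree + 1),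
          (-(R.coeff k) / Q.coeff 0) • c ^ (k + 1) := by
        funext g
        show (1 : ℂ) = _
        rw [Finset.sum_apply]
        have hsum : ∑ k ∈ Finset.range (R.natDegree + 1),
            -(R.coeff k) / Q.coeff 0 * ((ν g : ℚ)) ^ (k + 1) = 1 := by
          have hev : Polynomial.eval ((ν g : ℚ)) R
              = ∑ k ∈ Finset.range (R.natDegree + 1), R.coeff k * ((ν g : ℚ)) ^ k :=
            Polynomial.eval_eq_sum_range _
          calc ∑ k ∈ Finset.range (R.natDegree + 1),
              -(R.coeff k) / Q.coeff 0 * ((ν g : ℚ)) ^ (k + 1)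
              = (∑ k ∈ Finset.range (R.natDegree + 1), R.coeff k * ((ν g : ℚ)) ^ k)
                  * ((ν g : ℚ)) * (-1 / Q.coeff 0) := by
                rw [Finset.sum_mul, Finset.sum_mul]
                exact Finset.sum_congr rfl fun k _ => by ring
            _ = (ν g : ℚ) * Polynomial.eval ((ν g : ℚ)) R * (-1 / Q.coeff 0) := by
                rw [← hev]; ring
            _ = 1 := by rw [hkey g]; field_simp
        have hterm : ∀ k ∈ Finset.range (R.natDegree + 1),
            ((-(R.coeff k) / Q.coeff 0) • c ^ (k + 1)) g
              = (((-(R.coeff k) / Q.coeff 0) * ((ν g : ℚ)) ^ (k + 1) : ℚ) : ℂ) := by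
          intro k _
          rw [Pi.smul_apply, Pi.pow_apply, hcval g, Rat.smul_def]
          push_cast
          ring
        rw [Finset.sum_congr rfl hterm, ← Rat.cast_sum, hsum]
        norm_num
      rw [h1eq]
      exact Submodule.sum_mem _ fun k _ => Submodule.smul_mem _ _ (hpowA k)
    have hfin := hCharMulA χ hχ 1 hone
    rw [mul_one] at hfin
    exact hfin
  · -- backward direction
    intro hspan g
    by_contra hg
    push_neg at hg
    have h1 := hspan 1 isCharacter_one'
    have hz : ∀ f, f ∈ Submodule.span ℚ S → f g = 0 := by
      intro f hf
      induction hf using Submodule.span_induction with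
      | mem f hfS =>
        obtain ⟨i, φ, hφ, rfl⟩ := hfS
        simp only [inducedChar]
        rw [mul_eq_zero]
        right
        apply Finset.sum_eq_zero
        intro x _
        exact dif_neg fun hmem => hg i (x⁻¹ * g * x) hmem
          (isConj_iff.mpr ⟨x⁻¹, by group⟩)
      | zero => rfl
      | add x y hx hy ihx ihy => show x g + y g = 0; rw [ihx, ihy, add_zero]
      | smul a x hx ih => show (a • x) g = 0; rw [Pi.smul_apply, ih, smul_zero]
    have hcontra := hz 1 h1
    simp at hcontra
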